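/- For p ∈ (−∞, 0), the curvature function c_p(θ) = ((p-1)/p) (1/2)^{2(1-2/p)} (sin 2θ)^{2(1-2/p)} / [(cos θ)^{4/p̃} + (sin θ)^{4/p̃}]^{3/2} (with 1/p + 1/p̃ = 1, so 0 < p̃ < 1) is strictly increasing on (0, π/4). -/

import Mathlib

open Real Filter Topology

/-- Curvature of the α-geometry on `P¹₂`, parametrized by `ρ = (cos²θ, sin²θ)`. -/
noncomputable def cCurv (p pt θ : ℝ) : ℝ :=
  ((p - 1) / p) * (1 / 2 : ℝ) ^ (2 * (1 - 2 / p)) *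
    (Real.sin (2 * θ)) ^ (2 * (1 - 2 / p)) /
      ((Real.cos θ) ^ (4 / pt) + (Real.sin θ) ^ (4 / pt)) ^ ((3 : ℝ) / 2)

private lemma F_strictAntiOn {a : ℝ} (ha : 4 < a) :
    StrictAntiOn (fun θ : ℝ => Real.cos θ ^ a + Real.sin θ ^ a)
      (Set.Icc 0 (π / 4)) := by
  have ha0 : (0 : ℝ) ≤ a := by linarith
  apply strictAntiOn_of_deriv_neg (convex_Icc _ _)
  · apply ContinuousOn.add
    · exact ((Real.continuous_cos.continuousOn).rpow_const
        (fun x _ => Or.inr ha0))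
    · exact ((Real.continuous_sin.continuousOn).rpow_const
        (fun x _ => Or.inr ha0))
  · intro x hx
    rw [interior_Icc] at hx
    obtain ⟨hx0, hx4⟩ := hx
    have hπ : (0:ℝ) < π := Real.pi_pos
    have hs : 0 < Real.sin x := Real.sin_pos_of_pos_of_lt_pi hx0 (by linarith)
    have hc : 0 < Real.cos x := Real.cos_pos_of_mem_Ioo ⟨by linarith, by linarith⟩
    have hsc : Real.sin x < Real.cos x := by
      have := Real.cos_lt_cos_of_nonneg_of_le_pi (by linarith : (0:ℝ) ≤ x)
        (by linarith) (show x < π / 2 - x by linarith)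
      rwa [Real.cos_pi_div_two_sub] at this
    have hdc : HasDerivAt (fun θ : ℝ => Real.cos θ ^ a)
        ((-Real.sin x) * a * Real.cos x ^ (a - 1)) x :=
      (Real.hasDerivAt_cos x).rpow_const (Or.inl hc.ne')
    have hds : HasDerivAt (fun θ : ℝ => Real.sin θ ^ a)
        (Real.cos x * a * Real.sin x ^ (a - 1)) x :=
      (Real.hasDerivAt_sin x).rpow_const (Or.inl hs.ne')
    have hD : HasDerivAt (fun θ : ℝ => Real.cos θ ^ a + Real.sin θ ^ a)
        ((-Real.sin x) * a * Real.cos x ^ (a - 1)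
          + Real.cos x * a * Real.sin x ^ (a - 1)) x := hdc.add hds
    rw [hD.deriv]
    have key : Real.sin x ^ (a - 2) < Real.cos x ^ (a - 2) :=
      Real.rpow_lt_rpow hs.le hsc (by linarith)
    have h1 : Real.sin x ^ (a - 1) = Real.sin x * Real.sin x ^ (a - 2) := by
      rw [← Real.rpow_one_add' hs.le (by linarith)]; ring_nf
    have h2 : Real.cos x ^ (a - 1) = Real.cos x * Real.cos x ^ (a - 2) := by
      rw [← Real.rpow_one_add' hc.le (by linarith)]; ring_nf
    rw [h1, h2]
    have hcs : 0 < Real.sin x * Real.cos x := mul_pos hs hc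
    nlinarith [mul_pos hcs (sub_pos.mpr key), mul_pos hcs hcs]

/-- For `p < 0` the curvature `c_p` is strictly increasing on `(0, π/4)`. -/
theorem cCurv_strictMonoOn_of_neg (p pt : ℝ) (hp : p < 0)
    (hpt : 1 / p + 1 / pt = 1) :
    StrictMonoOn (cCurv p pt) (Set.Ioo 0 (π / 4)) := by
  have hπ : (0:ℝ) < π := Real.pi_pos
  have h1p : 1 / p < 0 := one_div_neg.mpr hp
  have hipt : 1 < 1 / pt := by linarith
  have hpt0 : 0 < pt := one_div_pos.mp (by linarith)
  have ha : 4 < 4 / pt := by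
    rw [div_eq_mul_one_div]; nlinarith
  have h2p : 2 / p < 0 := div_neg_of_pos_of_neg two_pos hp
  have he : 2 < 2 * (1 - 2 / p) := by nlinarith
  have hC : 0 < (p - 1) / p * (1 / 2 : ℝ) ^ (2 * (1 - 2 / p)) := by
    apply mul_pos
    · exact div_pos_iff.mpr (Or.inr ⟨by linarith, hp⟩)
    · exact Real.rpow_pos_of_pos (by norm_num) _
  intro x hx y hy hxy
  obtain ⟨hx0, hx4⟩ := hx
  obtain ⟨hy0, hy4⟩ := hy
  -- numerator comparison
  have hsx : 0 < Real.sin (2 * x) :=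
    Real.sin_pos_of_pos_of_lt_pi (by linarith) (by linarith)
  have hsxy : Real.sin (2 * x) < Real.sin (2 * y) := by
    apply Real.strictMonoOn_sin ⟨by linarith, by linarith⟩ ⟨by linarith, by linarith⟩
    linarith
  have hnum : Real.sin (2 * x) ^ (2 * (1 - 2 / p)) <
      Real.sin (2 * y) ^ (2 * (1 - 2 / p)) :=
    Real.rpow_lt_rpow hsx.le hsxy (by linarith)
  have hnumx : 0 < Real.sin (2 * x) ^ (2 * (1 - 2 / p)) :=
    Real.rpow_pos_of_pos hsx _
  -- denominator comparison
  have hF := F_strictAntiOn ha (Set.Ioo_subset_Icc_self ⟨hx0, hx4⟩)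
    (Set.Ioo_subset_Icc_self ⟨hy0, hy4⟩) hxy
  have hsy : 0 < Real.sin y := Real.sin_pos_of_pos_of_lt_pi hy0 (by linarith)
  have hFy : 0 < Real.cos y ^ (4 / pt) + Real.sin y ^ (4 / pt) := by
    have : 0 < Real.sin y ^ (4 / pt) := Real.rpow_pos_of_pos hsy _
    have hcy : 0 < Real.cos y := Real.cos_pos_of_mem_Ioo ⟨by linarith, by linarith⟩
    have := Real.rpow_pos_of_pos hcy (4 / pt)
    positivity
  have hden : (Real.cos y ^ (4 / pt) + Real.sin y ^ (4 / pt)) ^ ((3:ℝ)/2) <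
      (Real.cos x ^ (4 / pt) + Real.sin x ^ (4 / pt)) ^ ((3:ℝ)/2) :=
    Real.rpow_lt_rpow hFy.le hF (by norm_num)
  have hdeny : 0 < (Real.cos y ^ (4 / pt) + Real.sin y ^ (4 / pt)) ^ ((3:ℝ)/2) :=
    Real.rpow_pos_of_pos hFy _
  unfold cCurv
  apply div_lt_div₀
  · exact mul_lt_mul_of_pos_left hnum hC
  · exact hden.le
  · exact (mul_pos hC (Real.rpow_pos_of_pos
      (Real.sin_pos_of_pos_of_lt_pi (by linarith) (by linarith)) _)).le
  · exact hdeny
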